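/- Let C ⊆ Q_q^d (d ≥ 2) be a code in which any two distinct codewords have Hamming distance at least 2. Suppose that for each a ∈ Q_q the embedded retract C^d_a = {x ∈ C : x_d = a} is a subset of some MDS(1,d,q) code M_a ⊆ Q_q^d. Then there exists an MDS(1,d,q^2) code M over the alphabet Q_q × Q_q (identified with Q_{q^2}) such that the image of C under the coordinatewise map x_i ↦ (0,x_i) for i < d and x_d ↦ (x_d,x_d) (as in the generalized Cartesian product construction) is contained in M; in particular C embeds into an MDS(1,d,q^2) code. -/

import Mathlib

/-- `C ⊆ A^d` is an MDS code with code distance `t+1` over the alphabet `A`. -/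
def IsMDS {α : Type*} (d t : ℕ) (C : Set (Fin d → α)) : Prop :=
  ∀ S : Finset (Fin d), S.card = d - t →
    ∀ g : Fin d → α, ∃! x : Fin d → α, x ∈ C ∧ ∀ i ∈ S, x i = g i

open Classical in
noncomputable def g0 (n q : ℕ) (hq : 0 < q) (C : Set (Fin (n+1) → Fin q))
    (v : Fin n → Fin q) : Fin q :=
  if h : ∃ x ∈ C, ∀ i : Fin n, x i.castSucc = v i then h.choose (Fin.last n) else ⟨0, hq⟩

noncomputable def Aval (n q : ℕ) (hq : 0 < q) (C : Set (Fin (n+1) → Fin q))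
    (y : Fin (n+1) → Fin q × Fin q) : Fin q :=
  haveI : NeZero q := ⟨hq.ne'⟩
  (∑ i : Fin n, (y i.castSucc).1) + g0 n q hq C (fun i => (y i.castSucc).2)

lemma g0_spec (n q : ℕ) (hq : 0 < q) (C : Set (Fin (n+1) → Fin q))
    (hC : ∀ x ∈ C, ∀ y ∈ C, x ≠ y → 2 ≤ hammingDist x y)
    (x : Fin (n+1) → Fin q) (hx : x ∈ C) :
    g0 n q hq C (fun i => x i.castSucc) = x (Fin.last n) := by
  have h : ∃ x' ∈ C, ∀ i : Fin n, x' i.castSucc = x i.castSucc := ⟨x, hx, fun _ => rfl⟩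
  rw [g0, dif_pos h]
  obtain ⟨hx', hagree⟩ := h.choose_spec
  set x' := h.choose
  suffices hxx : x' = x by rw [hxx]
  by_contra hne
  have h2 := hC x' hx' x hx hne
  have h1 : hammingDist x' x ≤ 1 := by
    have : (Finset.univ.filter fun i => x' i ≠ x i) ⊆ {Fin.last n} := by
      intro i hi
      simp only [Finset.mem_filter] at hi
      rcases Fin.eq_castSucc_or_eq_last i with ⟨j, rfl⟩ | rfl
      · exact absurd (hagree j) hi.2
      · simp
    calc hammingDist x' x = (Finset.univ.filter fun i => x' i ≠ x i).card := rfl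
      _ ≤ ({Fin.last n} : Finset (Fin (n+1))).card := Finset.card_le_card this
      _ = 1 := Finset.card_singleton _
  omega

lemma mds_off {n q : ℕ} {D : Set (Fin (n+1) → Fin q)} (hD : IsMDS (n+1) 1 D)
    (j : Fin (n+1)) (h : Fin (n+1) → Fin q) :
    ∃! w, w ∈ D ∧ ∀ i, i ≠ j → w i = h i := by
  have hcard : ({j}ᶜ : Finset (Fin (n+1))).card = (n+1) - 1 := by
    simp [Finset.card_compl]
  obtain ⟨w, ⟨hw, hwa⟩, huniq⟩ := hD {j}ᶜ hcard h
  refine ⟨w, ⟨hw, fun i hi => hwa i (by simpa using hi)⟩, fun w' ⟨hw', hwa'⟩ =>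
    huniq w' ⟨hw', fun i hi => hwa' i (by simpa using hi)⟩⟩

set_option maxHeartbeats 1000000 in
theorem embed_retracts (n q : ℕ) (hn : 1 ≤ n) (hq : 0 < q)
    (C : Set (Fin (n + 1) → Fin q))
    (hC : ∀ x ∈ C, ∀ y ∈ C, x ≠ y → 2 ≤ hammingDist x y)
    (M : Fin q → Set (Fin (n + 1) → Fin q))
    (hM : ∀ a : Fin q, IsMDS (n + 1) 1 (M a))
    (hret : ∀ a : Fin q, {x ∈ C | x (Fin.last n) = a} ⊆ M a) :
    ∃ N : Set (Fin (n + 1) → Fin q × Fin q),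
      IsMDS (n + 1) 1 N ∧
        (fun x : Fin (n + 1) → Fin q => fun i : Fin (n + 1) =>
          if i = Fin.last n then (x i, x i) else ((⟨0, hq⟩ : Fin q), x i)) '' C ⊆ N := by
  haveI : NeZero q := ⟨hq.ne'⟩
  classical
  set A := Aval n q hq C with hA
  refine ⟨{ y | (fun i => (y i).2) ∈ M (A y) ∧ (y (Fin.last n)).1 = A y }, ?_, ?_⟩
  · -- MDS property
    intro S hS g
    -- find the missing coordinate j
    obtain ⟨j, hj⟩ : ∃ j, Sᶜ = {j} := by
      apply Finset.card_eq_one.mp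
      have := Finset.card_compl S
      simp only [Fintype.card_fin] at this
      omega
    have hmem : ∀ i : Fin (n+1), i ∈ S ↔ i ≠ j := by
      intro i
      rw [← Finset.notMem_compl, hj, Finset.mem_singleton]
    -- reduce to condition off j
    have key : ∃! y : Fin (n+1) → Fin q × Fin q,
        y ∈ { y | (fun i => (y i).2) ∈ M (A y) ∧ (y (Fin.last n)).1 = A y } ∧
        ∀ i, i ≠ j → y i = g i := by
      rcases Fin.eq_castSucc_or_eq_last j with ⟨k, rfl⟩ | rfl
      · -- j = k.castSucc
        set a := (g (Fin.last n)).1 with ha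
        obtain ⟨w, ⟨hw, hwa⟩, hwuniq⟩ := mds_off (hM a) k.castSucc (fun i => (g i).2)
        set c := g0 n q hq C (fun i => w i.castSucc) with hc
        set u := a - (∑ i ∈ Finset.univ.erase k, (g i.castSucc).1) - c with hu
        set y : Fin (n+1) → Fin q × Fin q :=
          fun i => ((if i = k.castSucc then u else (g i).1), w i) with hy
        have hyoff : ∀ i, i ≠ k.castSucc → y i = g i := by
          intro i hi
          simp only [hy, if_neg hi]
          rw [hwa i hi]
        have hsnd : (fun i => (y i).2) = w := rfl
        have hAy : A y = a := by
          have hv : (fun i : Fin n => (y i.castSucc).2) = fun i => w i.castSucc := rfl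
          rw [hA, Aval, hv, ← hc]
          have hsum : (∑ i : Fin n, (y i.castSucc).1)
              = u + ∑ i ∈ Finset.univ.erase k, (g i.castSucc).1 := by
            rw [← Finset.add_sum_erase _ _ (Finset.mem_univ k)]
            congr 1
            · simp [hy]
            · apply Finset.sum_congr rfl
              intro i hi
              have : i ≠ k := (Finset.mem_erase.mp hi).1
              simp [hy, Fin.castSucc_inj, this]
          rw [hsum, hu]
          abel
        have hylast : y (Fin.last n) = g (Fin.last n) :=
          hyoff _ (Fin.castSucc_lt_last k).ne'
        refine ⟨y, ⟨⟨by rw [hsnd, hAy]; exact hw, by rw [hylast, hAy]⟩, hyoff⟩, ?_⟩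
        rintro y' ⟨⟨hy'M, hy'last⟩, hy'off⟩
        have hAy' : A y' = a := by
          rw [← hy'last, hy'off _ (Fin.castSucc_lt_last k).ne', ha]
        have hsndy' : (fun i => (y' i).2) = w := by
          apply hwuniq
          refine ⟨by rw [← hAy']; exact hy'M, fun i hi => by rw [hy'off i hi]⟩
        have hfst : (y' k.castSucc).1 = u := by
          have hAexp : A y' = (∑ i : Fin n, (y' i.castSucc).1)
              + g0 n q hq C (fun i => (y' i.castSucc).2) := rfl
          have hv' : (fun i : Fin n => (y' i.castSucc).2) = fun i => w i.castSucc := by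
            funext i; rw [show (y' i.castSucc).2 = w i.castSucc from congrFun hsndy' _]
          have hsum' : (∑ i : Fin n, (y' i.castSucc).1)
              = (y' k.castSucc).1 + ∑ i ∈ Finset.univ.erase k, (g i.castSucc).1 := by
            rw [← Finset.add_sum_erase _ _ (Finset.mem_univ k)]
            congr 1
            apply Finset.sum_congr rfl
            intro i hi
            have hik : i ≠ k := (Finset.mem_erase.mp hi).1
            rw [hy'off i.castSucc (by simpa [Fin.castSucc_inj] using hik)]
          have := hAy'
          rw [hAexp, hv', ← hc, hsum'] at this
          have : (y' k.castSucc).1 = a - (∑ i ∈ Finset.univ.erase k, (g i.castSucc).1) - c := by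
            rw [← this]; abel
          rw [this, hu]
        funext i
        by_cases hi : i = k.castSucc
        · subst hi
          have : (y' k.castSucc).2 = w k.castSucc := congrFun hsndy' _
          have hyk : y k.castSucc = (u, w k.castSucc) := by
            simp [hy]
          rw [hyk, Prod.ext_iff]
          exact ⟨hfst, this⟩
        · rw [hy'off i hi, ← hyoff i hi]
      · -- j = last
        set a := (∑ i : Fin n, (g i.castSucc).1)
            + g0 n q hq C (fun i => (g i.castSucc).2) with ha
        obtain ⟨w, ⟨hw, hwa⟩, hwuniq⟩ := mds_off (hM a) (Fin.last n) (fun i => (g i).2)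
        set y : Fin (n+1) → Fin q × Fin q :=
          fun i => ((if i = Fin.last n then a else (g i).1), w i) with hy
        have hyoff : ∀ i, i ≠ Fin.last n → y i = g i := by
          intro i hi
          simp only [hy, if_neg hi]
          rw [hwa i hi]
        have hsnd : (fun i => (y i).2) = w := rfl
        have hAy : A y = a := by
          rw [hA, Aval, ha]
          congr 1
          · apply Finset.sum_congr rfl
            intro i _
            rw [hyoff i.castSucc (Fin.castSucc_lt_last i).ne]
          · congr 1
            funext i
            rw [hyoff i.castSucc (Fin.castSucc_lt_last i).ne]
        refine ⟨y, ⟨⟨by rw [hsnd, hAy]; exact hw, by rw [hAy]; simp [hy]⟩, hyoff⟩, ?_⟩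
        rintro y' ⟨⟨hy'M, hy'last⟩, hy'off⟩
        have hAy' : A y' = a := by
          rw [hA, Aval, ha]
          congr 1
          · apply Finset.sum_congr rfl
            intro i _
            rw [hy'off i.castSucc (Fin.castSucc_lt_last i).ne]
          · congr 1
            funext i
            rw [hy'off i.castSucc (Fin.castSucc_lt_last i).ne]
        have hsndy' : (fun i => (y' i).2) = w := by
          apply hwuniq
          refine ⟨by rw [← hAy']; exact hy'M, fun i hi => by rw [hy'off i hi]⟩
        funext i
        by_cases hi : i = Fin.last n
        · subst hi
          rw [Prod.ext_iff]
          constructor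
          · rw [hy'last, hAy']
            simp [hy]
          · rw [show (y' (Fin.last n)).2 = w (Fin.last n) from congrFun hsndy' _]
        · rw [hy'off i hi, ← hyoff i hi]
    -- transfer key to the S-formulation
    obtain ⟨y, ⟨hyN, hyoff⟩, hyuniq⟩ := key
    refine ⟨y, ⟨hyN, fun i hi => hyoff i ((hmem i).mp hi)⟩, ?_⟩
    rintro y' ⟨hy'N, hy'ag⟩
    exact hyuniq y' ⟨hy'N, fun i hi => hy'ag i ((hmem i).mpr hi)⟩
  · -- image of C contained
    rintro _ ⟨x, hx, rfl⟩
    set y : Fin (n+1) → Fin q × Fin q := fun i : Fin (n+1) =>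
      if i = Fin.last n then (x i, x i) else ((⟨0, hq⟩ : Fin q), x i) with hy
    have hsnd : (fun i => (y i).2) = x := by
      funext i
      simp only [hy]
      split <;> rfl
    have h0 : (⟨0, hq⟩ : Fin q) = 0 := rfl
    have hAy : A y = x (Fin.last n) := by
      rw [hA, Aval]
      have h1 : (∑ i : Fin n, (y i.castSucc).1) = 0 := by
        apply Finset.sum_eq_zero
        intro i _
        simp [hy, (Fin.castSucc_lt_last i).ne, h0]
      have h2 : (fun i : Fin n => (y i.castSucc).2) = fun i => x i.castSucc := by
        funext i
        simp [hy, (Fin.castSucc_lt_last i).ne]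
      rw [h1, h2, g0_spec n q hq C hC x hx, zero_add]
    constructor
    · rw [hsnd, hAy]
      exact hret _ ⟨hx, rfl⟩
    · rw [hAy]
      simp [hy]
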